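/- Let h ∈ Z^n with centroid h̄ (h̄_i = h_i + i/(n+1), h_0 = 0), G_h as above, and let i_0 be the index minimizing h̄. A connected spanning subgraph G ⊆ G_h admits no (G,h)-active edge if and only if G is an h-increasing tree, i.e., a tree such that along every simple path i_0, i_1, ..., i_k starting at i_0, one has h̄_{i_0} < h̄_{i_1} < ... < h̄_{i_k}. -/

import Mathlib

open scoped Classical
open MeasureTheory

noncomputable section

def extv {α : Type*} [Zero α] {n : ℕ} (x : Fin n → α) : Fin (n + 1) → α :=
  Fin.cases 0 x

/-- The centroid `h̄` of `h ∈ ℤ^n`: `h̄_i = h_i + i/(n+1)`, with the convention `h_0 = 0`. -/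
def cent (n : ℕ) (h : Fin n → ℤ) : Fin (n + 1) → ℝ :=
  fun i => (extv h i : ℤ) + (i : ℝ) / (n + 1)

/-- The graph `G_h` on `{0, …, n}` whose edges are the pairs `(i,j)` with `|h̄_i - h̄_j| < 1`. -/
def Gh (n : ℕ) (h : Fin n → ℤ) : SimpleGraph (Fin (n + 1)) where
  Adj i j := i ≠ j ∧ |cent n h i - cent n h j| < 1
  symm := ⟨fun i j hij => ⟨hij.1.symm, by rw [abs_sub_comm]; exact hij.2⟩⟩
  loopless := ⟨fun i hi => hi.1 rfl⟩

/-- The key of the pair `(i, j)`: the pair `(min(h̄_i, h̄_j), max(h̄_i, h̄_j))` with the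
lexicographic order, along which edges of `G_h` are ordered. -/
def keyC (n : ℕ) (h : Fin n → ℤ) (p : Fin (n + 1) × Fin (n + 1)) : ℝ ×ₗ ℝ :=
  toLex (min (cent n h p.1) (cent n h p.2), max (cent n h p.1) (cent n h p.2))

/-- The subgraph of `G` consisting of the edges strictly greater than `e`. -/
def aboveC (n : ℕ) (h : Fin n → ℤ) (G : SimpleGraph (Fin (n + 1)))
    (e : Fin (n + 1) × Fin (n + 1)) : SimpleGraph (Fin (n + 1)) where
  Adj a b := G.Adj a b ∧ keyC n h e < keyC n h (a, b)
  symm := by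
    constructor
    intro a b hab
    refine ⟨hab.1.symm, ?_⟩
    have hk : keyC n h (a, b) = keyC n h (b, a) := by
      simp only [keyC]; rw [min_comm (cent n h a), max_comm (cent n h a)]
    rw [← hk]; exact hab.2
  loopless := ⟨fun a ha => G.loopless.irrefl a ha.1⟩

/-- An edge `e = (i, j)` of `G_h` (normalized so that `h̄_i < h̄_j`) is `(G, h)`-active if
`i` and `j` are joined by a path among the edges of `G` strictly greater than `e`. -/
def IsActiveC (n : ℕ) (h : Fin n → ℤ) (G : SimpleGraph (Fin (n + 1)))
    (e : Fin (n + 1) × Fin (n + 1)) : Prop :=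
  cent n h e.1 < cent n h e.2 ∧ (Gh n h).Adj e.1 e.2 ∧ (aboveC n h G e).Reachable e.1 e.2

/-- The finset of `(G, h)`-active edges. -/
def activeC (n : ℕ) (h : Fin n → ℤ) (G : SimpleGraph (Fin (n + 1))) :
    Finset (Fin (n + 1) × Fin (n + 1)) :=
  Finset.univ.filter (IsActiveC n h G)

/-- `G ⊕ e`: toggle the edge `e` (delete it if present, add it otherwise). -/
def toggleC {n : ℕ} (G : SimpleGraph (Fin (n + 1))) (e : Fin (n + 1) × Fin (n + 1)) :
    SimpleGraph (Fin (n + 1)) :=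
  if G.Adj e.1 e.2 then G.deleteEdges {s(e.1, e.2)}
  else G ⊔ SimpleGraph.fromEdgeSet {s(e.1, e.2)}

/-- The map `Ψ_h`: toggle the least `(G, h)`-active edge, if any. -/
def PsiH (n : ℕ) (h : Fin n → ℤ) (G : SimpleGraph (Fin (n + 1))) :
    SimpleGraph (Fin (n + 1)) :=
  if hne : (activeC n h G).Nonempty then
    toggleC G (Finset.exists_min_image (activeC n h G) (keyC n h) hne).choose
  else G

/-- The index `i_0` of the least coordinate of the centroid `h̄`. -/
def idxMin (n : ℕ) (h : Fin n → ℤ) : Fin (n + 1) :=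
  (Finite.exists_min (cent n h)).choose

/-- An `h`-increasing tree on `{0, …, n}`: a spanning tree of `G_h` such that `h̄` strictly
increases along every simple path starting at the vertex `i_0` minimizing `h̄`. -/
def IsIncTree (n : ℕ) (h : Fin n → ℤ) (T : SimpleGraph (Fin (n + 1))) : Prop :=
  T.IsTree ∧ T ≤ Gh n h ∧
    ∀ (v : Fin (n + 1)) (p : T.Walk (idxMin n h) v), p.IsPath →
      List.Chain' (fun a b => cent n h a < cent n h b) p.support

end

noncomputable section AuxLemmas

variable {n : ℕ} {h : Fin n → ℤ}

lemma cent_inj (n : ℕ) (h : Fin n → ℤ) : Function.Injective (cent n h) := by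
  intro i j hij
  unfold cent at hij
  have hn : ((n : ℝ) + 1) ≠ 0 := by positivity
  set a := extv h i with ha
  set b := extv h j with hb
  have h1 : (a : ℝ) * (n+1) + i = b * (n+1) + j := by
    field_simp at hij; linarith
  have h2 : (a : ℤ) * (n+1) + i = b * (n+1) + j := by exact_mod_cast h1
  have h3 : ((j : ℤ) - i) = ((n : ℤ)+1) * (a - b) := by ring_nf; linarith
  have h4 : ((j : ℤ) - i) = 0 := by
    refine Int.eq_zero_of_abs_lt_dvd ⟨a - b, h3⟩ ?_
    have hi : (i : ℤ) < (n : ℤ) + 1 := by exact_mod_cast i.isLt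
    have hj : (j : ℤ) < (n : ℤ) + 1 := by exact_mod_cast j.isLt
    have hi0 : 0 ≤ (i : ℤ) := by positivity
    have hj0 : 0 ≤ (j : ℤ) := by positivity
    rw [abs_sub_lt_iff]; omega
  have : (i : ℕ) = (j : ℕ) := by omega
  exact Fin.ext this

lemma cent_ne {a b : Fin (n+1)} (hab : a ≠ b) : cent n h a ≠ cent n h b :=
  fun hc => hab (cent_inj n h hc)

lemma keyC_lt₁ {x y a b : Fin (n+1)} (hxy : cent n h x ≤ cent n h y)
    (h1 : cent n h x < cent n h a) (h2 : cent n h x < cent n h b) :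
    keyC n h (x, y) < keyC n h (a, b) := by
  simp only [keyC, Prod.Lex.lt_iff, ofLex_toLex]
  left
  simp only [min_eq_left hxy, lt_min_iff]
  exact ⟨h1, h2⟩

lemma keyC_lt₂ {x y b : Fin (n+1)} (hxy : cent n h x ≤ cent n h y)
    (hb : cent n h y < cent n h b) :
    keyC n h (x, y) < keyC n h (x, b) := by
  have hxb : cent n h x ≤ cent n h b := le_trans hxy hb.le
  simp only [keyC, Prod.Lex.lt_iff, ofLex_toLex]
  right
  simp only [min_eq_left hxy, min_eq_left hxb, max_eq_right hxy, max_eq_right hxb]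
  exact ⟨trivial, hb⟩

lemma first_edge {x y z : Fin (n+1)} (hxy : cent n h x < cent n h y)
    (hlt : keyC n h (x, y) < keyC n h (x, z)) : cent n h y < cent n h z := by
  simp only [keyC, Prod.Lex.lt_iff, ofLex_toLex] at hlt
  rcases hlt with h1 | ⟨h1, h2⟩
  · rw [min_eq_left hxy.le] at h1
    exact absurd (min_le_left (cent n h x) (cent n h z)) (not_le.mpr h1)
  · rw [max_eq_right hxy.le] at h2
    rcases le_total (cent n h z) (cent n h x) with hzx | hzx
    · rw [max_eq_left hzx] at h2; linarith
    · rwa [max_eq_right hzx] at h2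

lemma gh_adj {a b : Fin (n+1)} (hab : cent n h a < cent n h b)
    (hd : cent n h b - cent n h a < 1) : (Gh n h).Adj a b := by
  show _ ∧ _
  refine ⟨fun he => absurd (congrArg (cent n h) he) (ne_of_lt hab), ?_⟩
  rw [abs_sub_lt_iff]
  constructor <;> linarith

lemma gh_dist {G : SimpleGraph (Fin (n+1))} (hG1 : G ≤ Gh n h) {a b : Fin (n+1)}
    (hab : G.Adj a b) : |cent n h a - cent n h b| < 1 := (show _ ∧ _ from hG1 hab).2

/-- The strict minimality of `idxMin`. -/
lemma cent_idxMin_lt {x : Fin (n+1)} (hx : x ≠ idxMin n h) :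
    cent n h (idxMin n h) < cent n h x :=
  lt_of_le_of_ne ((Finite.exists_min (cent n h)).choose_spec x)
    (cent_ne (Ne.symm hx))

/-- Monotonicity along paths in `aboveC`, given uniqueness of "parents". -/
lemma mono_end {G : SimpleGraph (Fin (n+1))} {e : Fin (n+1) × Fin (n+1)}
    (hP : ∀ v a b : Fin (n+1), G.Adj a v → G.Adj b v → cent n h a < cent n h v →
      cent n h b < cent n h v → a = b) :
    ∀ {a b : Fin (n+1)} (p : (aboveC n h G e).Walk a b), p.IsPath →
      ∀ c, G.Adj c a → c ∉ p.support → cent n h c < cent n h a →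
      cent n h a ≤ cent n h b := by
  intro a b p
  induction p with
  | nil => intro _ c _ _ _; exact le_refl _
  | @cons a d b hadj q ih =>
    intro hp c hca hcs hclt
    have hGad : G.Adj a d := (show _ ∧ _ from hadj).1
    rw [SimpleGraph.Walk.cons_isPath_iff] at hp
    have hcsq : c ∉ q.support := fun hc => hcs (by
      rw [SimpleGraph.Walk.support_cons]; exact List.mem_cons_of_mem _ hc)
    have hcna : c ≠ a := by
      intro hc; subst hc; exact G.loopless.irrefl _ hca
    have had : cent n h a < cent n h d := by
      rcases lt_or_gt_of_ne (cent_ne (G.ne_of_adj hGad)) with h1 | h2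
      · exact h1
      · exact absurd (hP a c d hca hGad.symm hclt h2)
          (fun hcd => hcsq (hcd ▸ q.start_mem_support))
    have := ih hp.1 a hGad hp.2 had
    linarith

/-- The key of an unordered edge. -/
def keyS (n : ℕ) (h : Fin n → ℤ) : Sym2 (Fin (n + 1)) → ℝ ×ₗ ℝ :=
  Sym2.lift ⟨fun a b => keyC n h (a, b), fun a b => by
    simp only [keyC]; rw [min_comm, max_comm]⟩

@[simp] lemma keyS_mk (a b : Fin (n+1)) : keyS n h s(a, b) = keyC n h (a, b) := rfl

lemma keyS_inj : Function.Injective (keyS n h) := by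
  intro s t hst
  induction s using Sym2.ind with | _ a b =>
  induction t using Sym2.ind with | _ c d =>
  simp only [keyS_mk, keyC, toLex_inj, Prod.mk.injEq] at hst
  obtain ⟨hmin, hmax⟩ := hst
  rcases le_total (cent n h a) (cent n h b) with hab | hab <;>
    rcases le_total (cent n h c) (cent n h d) with hcd | hcd
  · rw [min_eq_left hab, min_eq_left hcd] at hmin
    rw [max_eq_right hab, max_eq_right hcd] at hmax
    rw [cent_inj n h hmin, cent_inj n h hmax]
  · rw [min_eq_left hab, min_eq_right hcd] at hmin
    rw [max_eq_right hab, max_eq_left hcd] at hmax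
    rw [cent_inj n h hmin, cent_inj n h hmax, Sym2.eq_swap]
  · rw [min_eq_right hab, min_eq_left hcd] at hmin
    rw [max_eq_left hab, max_eq_right hcd] at hmax
    rw [cent_inj n h hmin, cent_inj n h hmax, Sym2.eq_swap]
  · rw [min_eq_right hab, min_eq_right hcd] at hmin
    rw [max_eq_left hab, max_eq_left hcd] at hmax
    rw [cent_inj n h hmin, cent_inj n h hmax]

end AuxLemmas

noncomputable section MainLemmas

variable {n : ℕ} {h : Fin n → ℤ}

/-- In an `h`-increasing tree, any two neighbours of `v` below `v` coincide. -/
lemma inc_parent {G : SimpleGraph (Fin (n+1))} (hT : IsIncTree n h G) :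
    ∀ v a b : Fin (n+1), G.Adj a v → G.Adj b v → cent n h a < cent n h v →
      cent n h b < cent n h v → a = b := by
  obtain ⟨htree, hle, hinc⟩ := hT
  -- for a neighbour `a` of `v` with smaller `cent`, `a` is the second vertex of the reversed
  -- canonical path from `idxMin` to `v`.
  have key : ∀ a v : Fin (n+1), G.Adj a v → cent n h a < cent n h v →
      a = ((htree.existsUnique_path (idxMin n h) v).choose : G.Walk (idxMin n h) v).reverse.getVert 1 := by
    intro a v hav hlt
    obtain ⟨q, hq, -⟩ := htree.existsUnique_path (idxMin n h) a
    have hvq : v ∉ q.support := by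
      intro hv
      have hchain : List.Chain' (fun x y => cent n h x < cent n h y) q.support :=
        hinc a q hq
      haveI : IsTrans (Fin (n+1)) (fun x y => cent n h x < cent n h y) :=
        ⟨fun _ _ _ => lt_trans⟩
      have hpw : List.Pairwise (fun x y => cent n h x < cent n h y) q.support :=
        List.isChain_iff_pairwise.mp hchain
      have hpwr : List.Pairwise (flip fun x y => cent n h x < cent n h y) q.support.reverse :=
        (List.pairwise_reverse).mpr hpw
      have hrev : q.reverse.support = q.support.reverse := q.support_reverse
      have : q.reverse.support = a :: q.reverse.support.tail := q.reverse.support_eq_cons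
      rw [hrev] at this
      rw [this] at hpwr
      have hv' : v ∈ a :: q.support.reverse.tail := by
        rw [← this, List.mem_reverse]; exact hv
      rcases List.mem_cons.mp hv' with hva | hvt
      · exact absurd (congrArg (cent n h) hva) (by intro hc; rw [hva] at hlt; linarith)
      · have := (List.pairwise_cons.mp hpwr).1 v hvt
        simp only [flip] at this
        linarith
    have hpath : (q.concat hav).IsPath := by
      rw [← SimpleGraph.Walk.isPath_reverse_iff, SimpleGraph.Walk.reverse_concat]
      rw [SimpleGraph.Walk.cons_isPath_iff]
      refine ⟨hq.reverse, ?_⟩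
      rw [SimpleGraph.Walk.support_reverse, List.mem_reverse]
      exact hvq
    have huniq := (htree.existsUnique_path (idxMin n h) v).choose_spec
    have heq : q.concat hav = (htree.existsUnique_path (idxMin n h) v).choose :=
      huniq.2 _ hpath
    rw [← heq, SimpleGraph.Walk.reverse_concat]
    simp [SimpleGraph.Walk.getVert_cons_succ]
  intro v a b hav hbv ha hb
  rw [key a v hav ha, key b v hbv hb]

/-- Core lemma for direction `⇒`: walking down from `d` (above `v`) to `z` (below `v`),
avoiding `v`, while being able to reach `v` from `d` by large edges, yields an active edge. -/
lemma reachAux {G : SimpleGraph (Fin (n+1))} (hG1 : G ≤ Gh n h)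
    (noact : ∀ e : Fin (n + 1) × Fin (n + 1), ¬ IsActiveC n h G e) (v : Fin (n+1)) :
    ∀ {d z : Fin (n+1)} (r : G.Walk d z), v ∉ r.support → cent n h z < cent n h v →
      cent n h v < cent n h d →
      (∀ c : Fin (n+1), cent n h c < cent n h v →
        Nonempty ((aboveC n h G (c, v)).Walk d v)) → False := by
  intro d z r
  induction r with
  | nil => intro _ hzv hvd; intro _; linarith
  | @cons d d' z hadj r' ih =>
    intro hvs hzv hvd hW
    rw [SimpleGraph.Walk.support_cons] at hvs
    have hvs' : v ∉ r'.support := fun hc => hvs (List.mem_cons_of_mem _ hc)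
    have hd'v : d' ≠ v := fun hc => hvs' (hc ▸ r'.start_mem_support)
    rcases lt_or_gt_of_ne (cent_ne hd'v) with h1 | h2
    · -- `cent d' < cent v`: the edge `(d', v)` is active.
      obtain ⟨w0⟩ := hW d' h1
      have hedge : (aboveC n h G (d', v)).Adj d' d :=
        show _ ∧ _ from ⟨hadj.symm, keyC_lt₂ h1.le hvd⟩
      have hghadj : (Gh n h).Adj d' v := by
        refine gh_adj h1 ?_
        have := gh_dist hG1 hadj
        rw [abs_sub_lt_iff] at this
        linarith
      exact noact (d', v) ⟨h1, hghadj, ⟨SimpleGraph.Walk.cons hedge w0⟩⟩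
    · -- `cent v < cent d'`: recurse.
      refine ih hvs' hzv h2 (fun c hc => ?_)
      obtain ⟨w0⟩ := hW c hc
      have hedge : (aboveC n h G (c, v)).Adj d' d :=
        show _ ∧ _ from ⟨hadj.symm, keyC_lt₁ hc.le (lt_trans hc h2) (lt_trans hc hvd)⟩
      exact ⟨SimpleGraph.Walk.cons hedge w0⟩

/-- With no active edge, `cent` strictly decreases along any path towards `idxMin`. -/
lemma desc_chain {G : SimpleGraph (Fin (n+1))} (hG1 : G ≤ Gh n h)
    (noact : ∀ e : Fin (n + 1) × Fin (n + 1), ¬ IsActiveC n h G e) :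
    ∀ {v z : Fin (n+1)} (q : G.Walk v z), q.IsPath → z = idxMin n h →
      List.Chain' (fun a b => cent n h b < cent n h a) q.support := by
  intro v z q
  induction q with
  | nil => intro _ _; exact List.isChain_singleton _
  | @cons v d z hadj r ih =>
    intro hq hz
    subst hz
    rw [SimpleGraph.Walk.cons_isPath_iff] at hq
    have hchain := ih hq.1 rfl
    have hvi : v ≠ idxMin n h := fun hc => hq.2 (hc ▸ r.end_mem_support)
    have hiv : cent n h (idxMin n h) < cent n h v := cent_idxMin_lt hvi
    have hdv : cent n h d < cent n h v := by
      rcases lt_or_gt_of_ne (cent_ne (G.ne_of_adj hadj)) with h1 | h2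
      swap; · exact h2
      exfalso
      refine reachAux hG1 noact v r hq.2 hiv h1 (fun c hc => ?_)
      have hedge : (aboveC n h G (c, v)).Adj d v :=
        show _ ∧ _ from ⟨hadj.symm, keyC_lt₁ hc.le (lt_trans hc h1) hc⟩
      exact ⟨hedge.toWalk⟩
    rw [SimpleGraph.Walk.support_cons, r.support_eq_cons]
    exact List.IsChain.cons_cons hdv (r.support_eq_cons ▸ hchain)

end MainLemmas

noncomputable section CycleLemmas

variable {n : ℕ} {h : Fin n → ℤ}

open SimpleGraph

lemma cycle_aux {G : SimpleGraph (Fin (n+1))} (hG1 : G ≤ Gh n h)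
    (noact : ∀ e : Fin (n + 1) × Fin (n + 1), ¬ IsActiveC n h G e)
    {x y : Fin (n+1)} (hadj : G.Adj x y) (hxy : cent n h x < cent n h y)
    (hmin : ∀ f : Sym2 (Fin (n+1)), (∃ (u : Fin (n+1)) (w : G.Walk u u), w.IsCycle ∧ f ∈ w.edges) →
      keyS n h s(x, y) ≤ keyS n h f)
    (hcyc : ∃ (u : Fin (n+1)) (w : G.Walk u u), w.IsCycle ∧ s(x, y) ∈ w.edges) : False := by
  have hr : (G.deleteEdges {s(x, y)}).Reachable x y :=
    ((SimpleGraph.adj_and_reachable_delete_edges_iff_exists_cycle).mpr hcyc).2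
  obtain ⟨q0⟩ := hr
  obtain ⟨q, hqp⟩ := q0.toPath
  have hsub : ∀ f ∈ q.edges, f ∈ G.edgeSet := by
    intro f hf
    have := q.edges_subset_edgeSet hf
    rw [SimpleGraph.edgeSet_deleteEdges] at this
    exact this.1
  have hnotin : s(x, y) ∉ q.edges := by
    intro hf
    have := q.edges_subset_edgeSet hf
    rw [SimpleGraph.edgeSet_deleteEdges] at this
    exact this.2 rfl
  set qq := q.transfer G hsub with hqq
  have hqqp : qq.IsPath := hqp.transfer hsub
  have hqqe : qq.edges = q.edges := q.edges_transfer hsub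
  have hnotin' : s(x, y) ∉ qq.edges := by rw [hqqe]; exact hnotin
  have hcycle : (SimpleGraph.Walk.cons hadj.symm qq).IsCycle :=
    SimpleGraph.Path.cons_isCycle ⟨qq, hqqp⟩ hadj.symm (by rwa [Sym2.eq_swap])
  have hedgeS : ∀ f ∈ qq.edges, keyC n h (x, y) < keyS n h f := by
    intro f hf
    have hfS : ∃ (u : Fin (n+1)) (w : G.Walk u u), w.IsCycle ∧ f ∈ w.edges :=
      ⟨y, _, hcycle, by rw [SimpleGraph.Walk.edges_cons]; exact List.mem_cons_of_mem _ hf⟩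
    refine lt_of_le_of_ne (hmin f hfS) (fun heq => ?_)
    have : s(x, y) = f := keyS_inj heq
    rw [← this] at hf
    exact hnotin' hf
  have hsub2 : ∀ f ∈ qq.edges, f ∈ (aboveC n h G (x, y)).edgeSet := by
    intro f hf
    induction f using Sym2.ind with | _ a b =>
    rw [SimpleGraph.mem_edgeSet]
    show _ ∧ _
    refine ⟨?_, ?_⟩
    · rw [← SimpleGraph.mem_edgeSet]
      exact qq.edges_subset_edgeSet hf
    · exact hedgeS _ hf
  have hwalk : (aboveC n h G (x, y)).Walk x y := qq.transfer _ hsub2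
  exact noact (x, y) ⟨hxy, hG1 hadj, ⟨hwalk⟩⟩

lemma no_cycle {G : SimpleGraph (Fin (n+1))} (hG1 : G ≤ Gh n h)
    (noact : ∀ e : Fin (n + 1) × Fin (n + 1), ¬ IsActiveC n h G e) : G.IsAcyclic := by
  intro u c hc
  classical
  set S : Finset (Sym2 (Fin (n+1))) :=
    Finset.univ.filter
      (fun s => ∃ (u : Fin (n+1)) (w : G.Walk u u), w.IsCycle ∧ s ∈ w.edges) with hSdef
  have hne : S.Nonempty := by
    have hlen : c.edges ≠ [] := by
      have h3 := hc.three_le_length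
      have := c.length_edges
      intro hnil
      rw [hnil] at this
      simp at this
      omega
    obtain ⟨f, hf⟩ := List.exists_mem_of_ne_nil _ hlen
    exact ⟨f, by rw [hSdef, Finset.mem_filter]; exact ⟨Finset.mem_univ _, u, c, hc, hf⟩⟩
  obtain ⟨s₀, hs₀, hminS⟩ := S.exists_min_image (keyS n h) hne
  have hcyc : ∃ (u : Fin (n+1)) (w : G.Walk u u), w.IsCycle ∧ s₀ ∈ w.edges := by
    rw [hSdef, Finset.mem_filter] at hs₀; exact hs₀.2
  have hmin : ∀ f : Sym2 (Fin (n+1)), (∃ (u : Fin (n+1)) (w : G.Walk u u), w.IsCycle ∧ f ∈ w.edges) →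
      keyS n h s₀ ≤ keyS n h f := by
    intro f hf
    exact hminS f (by rw [hSdef, Finset.mem_filter]; exact ⟨Finset.mem_univ _, hf⟩)
  clear hminS hs₀ hne hSdef
  induction s₀ using Sym2.ind with | _ x y =>
  have hadj : G.Adj x y := by
    obtain ⟨u', w', hw', hmem⟩ := hcyc
    rw [← SimpleGraph.mem_edgeSet]
    exact w'.edges_subset_edgeSet hmem
  rcases lt_trichotomy (cent n h x) (cent n h y) with h1 | h2 | h3
  · exact cycle_aux hG1 noact hadj h1 hmin hcyc
  · exact cent_ne (G.ne_of_adj hadj) h2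
  · rw [Sym2.eq_swap] at hcyc hmin
    exact cycle_aux hG1 noact hadj.symm h3 hmin hcyc

end CycleLemmas

/-- A connected spanning subgraph `G ⊆ G_h` admits no `(G, h)`-active edge iff it is an
`h`-increasing tree. -/
theorem no_activeC_iff_incTree (n : ℕ) (h : Fin n → ℤ) (G : SimpleGraph (Fin (n + 1)))
    (hG1 : G ≤ Gh n h) (hG2 : G.Connected) :
    (∀ e : Fin (n + 1) × Fin (n + 1), ¬ IsActiveC n h G e) ↔ IsIncTree n h G := by
  constructor
  · -- no active edge → increasing tree
    intro noact
    have hacyc : G.IsAcyclic := no_cycle hG1 noact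
    refine ⟨⟨hG2, hacyc⟩, hG1, ?_⟩
    intro v p hp
    have hdesc := desc_chain hG1 noact p.reverse hp.reverse rfl
    rw [SimpleGraph.Walk.support_reverse] at hdesc
    have := List.isChain_reverse.mp hdesc
    exact this
  · -- increasing tree → no active edge
    intro hT
    rintro ⟨x, y⟩ ⟨hxy, hgh, hreach⟩
    obtain ⟨w0⟩ := hreach
    obtain ⟨p, hp⟩ := w0.toPath
    cases p with
    | nil => exact absurd hxy (lt_irrefl _)
    | @cons _ z _ hadj q =>
      have hzy : cent n h y < cent n h z := first_edge hxy (show _ ∧ _ from hadj).2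
      rw [SimpleGraph.Walk.cons_isPath_iff] at hp
      have := mono_end (inc_parent hT) q hp.1 x (show _ ∧ _ from hadj).1 hp.2 (lt_trans hxy hzy)
      linarith
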